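/- Let ι be a finite index type with decidable equality, let γ : ι → Type be a family of finite types with decidable equality, let n > 0, let d : Fin n → (Π i, γ i) be a data sample, and let y : Fin n → β for a finite type β with decidable equality, with empirical entropy Ĥ(y) > 0. For S ⊆ ι write x_S for the restriction of the sample to the attributes in S. Then for all subsets S ⊆ S' ⊆ ι, the reliable fraction of information of the superset is bounded by the optimistic estimator of the subset: F̂₀(x_{S'}; y) ≤ 1 − m̂₀(x_S, y)/Ĥ(y). -/

import Mathlib

open Finset

/-- Empirical mutual information between `x : Fin n → α` and `y : Fin n → β`,
`Î(x,y) = Σ_{v,w} (c(v,w)/n)·log(c(v,w)·n/(a(v)·b(w)))`, terms with `c(v,w)=0` being `0`. -/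
noncomputable def empMI {n : ℕ} {α β : Type*} [Fintype α] [DecidableEq α]
    [Fintype β] [DecidableEq β] (x : Fin n → α) (y : Fin n → β) : ℝ :=
  ∑ v : α, ∑ w : β,
    (((univ.filter fun t => x t = v ∧ y t = w).card : ℝ) / n) *
      Real.log ((((univ.filter fun t => x t = v ∧ y t = w).card : ℝ) * n) /
        (((univ.filter fun t => x t = v).card : ℝ) *
          ((univ.filter fun t => y t = w).card : ℝ)))

/-- Permutation-model expectation of the empirical mutual information:
`m̂₀(x,y) = (1/n!)·Σ_{σ ∈ Perm(Fin n)} Î(x, y∘σ)`. -/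
noncomputable def permExpMI {n : ℕ} {α β : Type*} [Fintype α] [DecidableEq α]
    [Fintype β] [DecidableEq β] (x : Fin n → α) (y : Fin n → β) : ℝ :=
  (1 / (n.factorial : ℝ)) * ∑ σ : Equiv.Perm (Fin n), empMI x (y ∘ σ)

/-- Empirical entropy `Ĥ(y) = −Σ_w (b(w)/n)·log(b(w)/n)`, terms with `b(w)=0` being `0`. -/
noncomputable def empEntropy {n : ℕ} {β : Type*} [Fintype β] [DecidableEq β]
    (y : Fin n → β) : ℝ :=
  -∑ w : β, (((univ.filter fun t => y t = w).card : ℝ) / n) *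
      Real.log (((univ.filter fun t => y t = w).card : ℝ) / n)

/-- Restriction `x_S` of the sample `d` to the attributes in `S`. -/
def restrictSample {ι : Type*} {γ : ι → Type*} {n : ℕ} (d : Fin n → ∀ i, γ i)
    (S : Finset ι) : Fin n → (∀ i : S, γ i) := fun t i => d t i


/-- Log-sum inequality. -/
lemma log_sum_ineq {ι : Type*} (s : Finset ι) (f g : ι → ℝ)
    (hf : ∀ i ∈ s, 0 ≤ f i) (hg : ∀ i ∈ s, 0 ≤ g i)
    (hfg : ∀ i ∈ s, f i ≠ 0 → 0 < g i) :
    (∑ i ∈ s, f i) * Real.log ((∑ i ∈ s, f i) / ∑ i ∈ s, g i) ≤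
      ∑ i ∈ s, f i * Real.log (f i / g i) := by
  classical
  set s' := s.filter (fun i => f i ≠ 0) with hs'
  have hsub : s' ⊆ s := filter_subset _ _
  have hfpos : ∀ i ∈ s', 0 < f i := by
    intro i hi
    rcases mem_filter.mp hi with ⟨hi1, hi2⟩
    exact lt_of_le_of_ne (hf i hi1) (Ne.symm hi2)
  have hgpos : ∀ i ∈ s', 0 < g i := by
    intro i hi
    rcases mem_filter.mp hi with ⟨hi1, hi2⟩
    exact hfg i hi1 hi2
  have hF : ∑ i ∈ s, f i = ∑ i ∈ s', f i := by
    refine (sum_subset hsub ?_).symm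
    intro i hi hni
    have : f i = 0 := by
      by_contra h
      exact hni (mem_filter.mpr ⟨hi, h⟩)
    simp [this]
  have hRHS : ∑ i ∈ s, f i * Real.log (f i / g i) =
      ∑ i ∈ s', f i * Real.log (f i / g i) := by
    refine (sum_subset hsub ?_).symm
    intro i hi hni
    have : f i = 0 := by
      by_contra h
      exact hni (mem_filter.mpr ⟨hi, h⟩)
    simp [this]
  rw [hRHS]
  by_cases hF0 : ∑ i ∈ s, f i = 0
  · rw [hF0, zero_mul]
    refine sum_nonneg ?_
    intro i hi
    have hfi : f i = 0 := by
      have := (sum_eq_zero_iff_of_nonneg hf).mp hF0 i (hsub hi)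
      exact this
    simp [hfi]
  · have hFpos : 0 < ∑ i ∈ s, f i :=
      lt_of_le_of_ne (sum_nonneg hf) (Ne.symm hF0)
    set F := ∑ i ∈ s, f i with hFdef
    have hs'ne : s'.Nonempty := by
      by_contra h
      rw [not_nonempty_iff_eq_empty] at h
      rw [hF, h, sum_empty] at hF0
      exact hF0 rfl
    have hG'pos : 0 < ∑ i ∈ s', g i := sum_pos hgpos hs'ne
    set G' := ∑ i ∈ s', g i with hG'def
    set G := ∑ i ∈ s, g i with hGdef
    have hG'G : G' ≤ G := sum_le_sum_of_subset_of_nonneg hsub (fun i hi _ => hg i hi)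
    have step1 : F * Real.log (F / G) ≤ F * Real.log (F / G') := by
      apply mul_le_mul_of_nonneg_left _ hFpos.le
      apply Real.log_le_log (div_pos hFpos (lt_of_lt_of_le hG'pos hG'G))
      exact div_le_div_of_nonneg_left hFpos.le hG'pos hG'G
    refine step1.trans ?_
    -- Jensen
    have jensen : ∑ i ∈ s', (f i / F) • Real.log (g i / f i) ≤
        Real.log (∑ i ∈ s', (f i / F) • (g i / f i)) := by
      refine (strictConcaveOn_log_Ioi.concaveOn).le_map_sum ?_ ?_ ?_
      · intro i hi; exact div_nonneg (hf i (hsub hi)) hFpos.le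
      · rw [← sum_div, ← hF, div_self hF0]
      · intro i hi
        exact Set.mem_Ioi.mpr (div_pos (hgpos i hi) (hfpos i hi))
    have hsum_eq : ∑ i ∈ s', (f i / F) • (g i / f i) = G' / F := by
      rw [hG'def, sum_div]
      refine sum_congr rfl ?_
      intro i hi
      have hfi := (hfpos i hi).ne'
      rw [smul_eq_mul, div_mul_div_comm, mul_comm (f i), mul_div_mul_right _ _ hfi]
    rw [hsum_eq] at jensen
    have jensen2 : ∑ i ∈ s', f i * Real.log (g i / f i) ≤ F * Real.log (G' / F) := by
      have := mul_le_mul_of_nonneg_left jensen hFpos.le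
      calc ∑ i ∈ s', f i * Real.log (g i / f i)
          = F * ∑ i ∈ s', (f i / F) • Real.log (g i / f i) := by
            rw [mul_sum]
            refine sum_congr rfl ?_
            intro i hi
            rw [smul_eq_mul]
            field_simp
        _ ≤ F * Real.log (G' / F) := this
    have hflip : ∀ i ∈ s', f i * Real.log (f i / g i) = -(f i * Real.log (g i / f i)) := by
      intro i hi
      have h := Real.log_inv (g i / f i)
      rw [inv_div] at h
      rw [h]; ring
    have hflipF : F * Real.log (F / G') = -(F * Real.log (G' / F)) := by
      have h := Real.log_inv (G' / F)
      rw [inv_div] at h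
      rw [h]; ring
    rw [hflipF]
    calc -(F * Real.log (G' / F)) ≤ -(∑ i ∈ s', f i * Real.log (g i / f i)) := by
          linarith
      _ = ∑ i ∈ s', f i * Real.log (f i / g i) := by
          rw [← sum_neg_distrib]
          exact sum_congr rfl fun i hi => (hflip i hi).symm

lemma card_fiber_count {n : ℕ} {α α₂ : Type*} [Fintype α] [DecidableEq α] [DecidableEq α₂]
    (f : α → α₂) (x : Fin n → α) (p : Fin n → Prop) [DecidablePred p] (u : α₂) :
    (univ.filter fun t => f (x t) = u ∧ p t).card =
      ∑ v ∈ univ.filter (fun v => f v = u), (univ.filter fun t => x t = v ∧ p t).card := by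
  classical
  rw [Finset.card_eq_sum_card_fiberwise
    (s := univ.filter fun t => f (x t) = u ∧ p t)
    (t := univ.filter fun v => f v = u) (f := x)
    (by intro t ht; rcases mem_filter.mp ht with ⟨_, h1, _⟩
        exact mem_filter.mpr ⟨mem_univ _, h1⟩)]
  refine sum_congr rfl ?_
  intro v hv
  rcases mem_filter.mp hv with ⟨_, hfv⟩
  congr 1
  ext t
  simp only [mem_filter, mem_univ, true_and]
  constructor
  · rintro ⟨⟨_, hp⟩, hxv⟩; exact ⟨hxv, hp⟩
  · rintro ⟨hxv, hp⟩; exact ⟨⟨hxv ▸ hfv, hp⟩, hxv⟩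

lemma sum_count_eq {n : ℕ} {α β : Type*} [Fintype α] [DecidableEq α]
    [Fintype β] [DecidableEq β] (x : Fin n → α) (y : Fin n → β) (w : β) :
    ∑ v : α, (univ.filter fun t => x t = v ∧ y t = w).card =
      (univ.filter fun t => y t = w).card := by
  classical
  rw [Finset.card_eq_sum_card_fiberwise
    (s := univ.filter fun t => y t = w) (t := univ) (f := x)
    (fun t _ => mem_univ _)]
  refine sum_congr rfl ?_
  intro v _
  congr 1
  ext t
  simp only [mem_filter, mem_univ, true_and]
  tauto

lemma empMI_le_empEntropy {n : ℕ} {α β : Type*} [Fintype α] [DecidableEq α]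
    [Fintype β] [DecidableEq β] (hn : 0 < n) (x : Fin n → α) (y : Fin n → β) :
    empMI x y ≤ empEntropy y := by
  classical
  unfold empMI empEntropy
  rw [Finset.sum_comm]
  have key : ∀ w : β,
      ∑ v : α, (((univ.filter fun t => x t = v ∧ y t = w).card : ℝ) / n) *
        Real.log ((((univ.filter fun t => x t = v ∧ y t = w).card : ℝ) * n) /
          (((univ.filter fun t => x t = v).card : ℝ) *
            ((univ.filter fun t => y t = w).card : ℝ)))
      ≤ -((((univ.filter fun t => y t = w).card : ℝ) / n) *
          Real.log (((univ.filter fun t => y t = w).card : ℝ) / n)) := by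
    intro w
    set b := ((univ.filter fun t => y t = w).card : ℝ) with hb
    have hbsum : ∑ v : α, ((univ.filter fun t => x t = v ∧ y t = w).card : ℝ) = b := by
      rw [hb]
      exact_mod_cast sum_count_eq x y w
    have hnR : (0:ℝ) < n := by exact_mod_cast hn
    have perterm : ∀ v : α,
        (((univ.filter fun t => x t = v ∧ y t = w).card : ℝ) / n) *
          Real.log ((((univ.filter fun t => x t = v ∧ y t = w).card : ℝ) * n) /
            (((univ.filter fun t => x t = v).card : ℝ) * b))
        ≤ (((univ.filter fun t => x t = v ∧ y t = w).card : ℝ) / n) * (-(Real.log (b / n))) := by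
      intro v
      set c := ((univ.filter fun t => x t = v ∧ y t = w).card : ℝ) with hc
      set a := ((univ.filter fun t => x t = v).card : ℝ) with ha
      by_cases hc0 : (univ.filter fun t => x t = v ∧ y t = w).card = 0
      · simp [hc, hc0]
      · have hcpos : 0 < c := by rw [hc]; exact_mod_cast Nat.pos_of_ne_zero hc0
        obtain ⟨t, ht⟩ := Finset.card_pos.mp (Nat.pos_of_ne_zero hc0)
        rcases mem_filter.mp ht with ⟨_, hxt, hyt⟩
        have hapos : 0 < a := by
          rw [ha]
          exact_mod_cast Finset.card_pos.mpr ⟨t, mem_filter.mpr ⟨mem_univ _, hxt⟩⟩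
        have hbpos : 0 < b := by
          rw [hb]
          exact_mod_cast Finset.card_pos.mpr ⟨t, mem_filter.mpr ⟨mem_univ _, hyt⟩⟩
        have hca : c ≤ a := by
          rw [hc, ha]
          exact_mod_cast Finset.card_le_card (fun t ht => by
            rcases mem_filter.mp ht with ⟨_, h1, _⟩
            exact mem_filter.mpr ⟨mem_univ _, h1⟩)
        have hsplit : (c * n) / (a * b) = (c / a) * (n / b) := by
          rw [div_mul_div_comm]
        have hlog : Real.log ((c * n) / (a * b)) = Real.log (c / a) + Real.log (n / b) := by
          rw [hsplit, Real.log_mul (by positivity) (by positivity)]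
        have hlog1 : Real.log (c / a) ≤ 0 :=
          Real.log_nonpos (by positivity) ((div_le_one hapos).mpr hca)
        have hlog2 : Real.log (n / b) = -(Real.log (b / n)) := by
          have h := Real.log_inv (b / n)
          rw [inv_div] at h
          exact h
        rw [hlog, hlog2]
        have : Real.log (c / a) + -Real.log (b / n) ≤ -Real.log (b / n) := by linarith
        exact mul_le_mul_of_nonneg_left this (by positivity)
    calc ∑ v : α, (((univ.filter fun t => x t = v ∧ y t = w).card : ℝ) / n) *
          Real.log ((((univ.filter fun t => x t = v ∧ y t = w).card : ℝ) * n) /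
            (((univ.filter fun t => x t = v).card : ℝ) * b))
        ≤ ∑ v : α, (((univ.filter fun t => x t = v ∧ y t = w).card : ℝ) / n) *
            (-(Real.log (b / n))) := sum_le_sum fun v _ => perterm v
      _ = -((b / n) * Real.log (b / n)) := by
          rw [← sum_mul, ← sum_div, hbsum]; ring
  calc ∑ w : β, ∑ v : α, _ ≤ ∑ w : β,
        -((((univ.filter fun t => y t = w).card : ℝ) / n) *
          Real.log (((univ.filter fun t => y t = w).card : ℝ) / n)) :=
        sum_le_sum fun w _ => key w
    _ = -∑ w : β, (((univ.filter fun t => y t = w).card : ℝ) / n) *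
          Real.log (((univ.filter fun t => y t = w).card : ℝ) / n) := by
        rw [Finset.sum_neg_distrib]

lemma empMI_comp_le {n : ℕ} {α α₂ β : Type*} [Fintype α] [DecidableEq α]
    [Fintype α₂] [DecidableEq α₂] [Fintype β] [DecidableEq β]
    (hn : 0 < n) (f : α → α₂) (x : Fin n → α) (y : Fin n → β) :
    empMI (f ∘ x) y ≤ empMI x y := by
  classical
  unfold empMI
  rw [← Finset.sum_fiberwise univ f (fun v => ∑ w : β,
    (((univ.filter fun t => x t = v ∧ y t = w).card : ℝ) / n) *
      Real.log ((((univ.filter fun t => x t = v ∧ y t = w).card : ℝ) * n) /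
        (((univ.filter fun t => x t = v).card : ℝ) *
          ((univ.filter fun t => y t = w).card : ℝ))))]
  refine sum_le_sum ?_
  intro u _
  rw [Finset.sum_comm]
  refine sum_le_sum ?_
  intro w _
  set b := ((univ.filter fun t => y t = w).card : ℝ) with hb
  have hnR : (0:ℝ) < n := by exact_mod_cast hn
  set s := univ.filter (fun v : α => f v = u) with hs
  have hc' : (((univ.filter fun t => (f ∘ x) t = u ∧ y t = w).card : ℝ)) =
      ∑ v ∈ s, ((univ.filter fun t => x t = v ∧ y t = w).card : ℝ) := by
    exact_mod_cast card_fiber_count f x (fun t => y t = w) u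
  have ha' : (((univ.filter fun t => (f ∘ x) t = u).card : ℝ)) =
      ∑ v ∈ s, ((univ.filter fun t => x t = v).card : ℝ) := by
    have h := card_fiber_count f x (fun _ => True) u
    simp only [and_true] at h
    exact_mod_cast h
  have key := log_sum_ineq s
    (fun v => ((univ.filter fun t => x t = v ∧ y t = w).card : ℝ))
    (fun v => ((univ.filter fun t => x t = v).card : ℝ) * b / n)
    (fun v _ => by positivity)
    (fun v _ => by positivity)
    (by
      intro v _ hne
      simp only [ne_eq, Nat.cast_eq_zero] at hne
      obtain ⟨t, ht⟩ := Finset.card_pos.mp (Nat.pos_of_ne_zero hne)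
      rcases mem_filter.mp ht with ⟨_, hxt, hyt⟩
      have h1 : (0:ℝ) < ((univ.filter fun t => x t = v).card : ℝ) := by
        exact_mod_cast Finset.card_pos.mpr ⟨t, mem_filter.mpr ⟨mem_univ _, hxt⟩⟩
      have h2 : (0:ℝ) < b := by
        rw [hb]
        exact_mod_cast Finset.card_pos.mpr ⟨t, mem_filter.mpr ⟨mem_univ _, hyt⟩⟩
      positivity)
  have hgsum : ∑ v ∈ s, ((univ.filter fun t => x t = v).card : ℝ) * b / n =
      ((univ.filter fun t => (f ∘ x) t = u).card : ℝ) * b / n := by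
    rw [ha', sum_mul, sum_div]
  calc (((univ.filter fun t => (f ∘ x) t = u ∧ y t = w).card : ℝ) / n) *
        Real.log ((((univ.filter fun t => (f ∘ x) t = u ∧ y t = w).card : ℝ) * n) /
          (((univ.filter fun t => (f ∘ x) t = u).card : ℝ) * b))
      = (1 / (n:ℝ)) * ((∑ v ∈ s, ((univ.filter fun t => x t = v ∧ y t = w).card : ℝ)) *
          Real.log ((∑ v ∈ s, ((univ.filter fun t => x t = v ∧ y t = w).card : ℝ)) /
            (∑ v ∈ s, ((univ.filter fun t => x t = v).card : ℝ) * b / n))) := by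
        rw [← hc', hgsum, div_div_eq_mul_div]
        ring
    _ ≤ (1 / (n:ℝ)) * ∑ v ∈ s, ((univ.filter fun t => x t = v ∧ y t = w).card : ℝ) *
          Real.log (((univ.filter fun t => x t = v ∧ y t = w).card : ℝ) /
            (((univ.filter fun t => x t = v).card : ℝ) * b / n)) :=
        mul_le_mul_of_nonneg_left key (by positivity)
    _ = ∑ v ∈ s, (((univ.filter fun t => x t = v ∧ y t = w).card : ℝ) / n) *
          Real.log ((((univ.filter fun t => x t = v ∧ y t = w).card : ℝ) * n) /
            (((univ.filter fun t => x t = v).card : ℝ) * b)) := by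
        rw [mul_sum]
        refine sum_congr rfl ?_
        intro v _
        rw [div_div_eq_mul_div]
        ring

lemma permExpMI_comp_le {n : ℕ} {α α₂ β : Type*} [Fintype α] [DecidableEq α]
    [Fintype α₂] [DecidableEq α₂] [Fintype β] [DecidableEq β]
    (hn : 0 < n) (f : α → α₂) (x : Fin n → α) (y : Fin n → β) :
    permExpMI (f ∘ x) y ≤ permExpMI x y := by
  unfold permExpMI
  exact mul_le_mul_of_nonneg_left
    (sum_le_sum fun σ _ => empMI_comp_le hn f x (y ∘ σ)) (by positivity)

/-- For attribute sets `S ⊆ S'`, the reliable fraction of information of the superset is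
bounded by the optimistic estimator of the subset:
`F̂₀(x_{S'}; y) ≤ 1 − m̂₀(x_S, y)/Ĥ(y)`. -/
theorem reliableFraction_le_optimistic {ι : Type*} [Fintype ι] [DecidableEq ι]
    {γ : ι → Type*} [∀ i, Fintype (γ i)] [∀ i, DecidableEq (γ i)]
    {n : ℕ} (hn : 0 < n) (d : Fin n → ∀ i, γ i)
    {β : Type*} [Fintype β] [DecidableEq β] (y : Fin n → β) (hH : 0 < empEntropy y)
    (S S' : Finset ι) (hSS' : S ⊆ S') :
    (empMI (restrictSample d S') y - permExpMI (restrictSample d S') y) / empEntropy y ≤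
      1 - permExpMI (restrictSample d S) y / empEntropy y := by
  have hnR : (0:ℝ) < n := by exact_mod_cast hn
  set fres : (∀ i : S', γ i) → (∀ i : S, γ i) := fun p i => p ⟨i.1, hSS' i.2⟩ with hfres
  have hcomp : restrictSample d S = fres ∘ restrictSample d S' := rfl
  have h1 : empMI (restrictSample d S') y ≤ empEntropy y :=
    empMI_le_empEntropy hn (restrictSample d S') y
  have h2 : permExpMI (restrictSample d S) y ≤ permExpMI (restrictSample d S') y := by
    rw [hcomp]
    exact permExpMI_comp_le hn fres (restrictSample d S') y
  rw [div_le_iff₀ hH]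
  have hE : (1 - permExpMI (restrictSample d S) y / empEntropy y) * empEntropy y =
      empEntropy y - permExpMI (restrictSample d S) y := by
    field_simp
  rw [hE]
  linarith
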